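/- arXiv:2512.20777 — 4 statements merged into one kernel-verified Lean document; each statement's English description precedes it below -/
import Mathlib

section
/- Let h_l(x) = \sum_{k \ge l} b_k x^k be a complex power series with radius of convergence R, and let \tilde{h}_l(x) = \sum_{k \ge l} |b_k| x^k. Let A be an n-by-n complex matrix with spectral radius \rho(A) < R, and let \|\cdot\| be a subordinate (operator) matrix norm on n-by-n complex matrices. Suppose that for every positive integer k there is a real number a_k with \|A^k\| \le a_k. Let p be a positive integer with 1 \le p \le l, let p_0 be the (unique) multiple of p satisfying l \le p_0 \le l + p - 1, and set \alpha_p = max{ a_k^{1/k} : k = p, l, l+1, l+2, \ldots, p_0 - 1, p_0 + 1, p_0 + 2, \ldots, l + p - 1 }. If \alpha_p < R, then \|h_l(A)\| \le \tilde{h}_l(\alpha_p), i.e. \| \sum_{k \ge l} b_k A^k \| \le \sum_{k \ge l} |b_k| \alpha_p^k. -/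
open scoped ENNReal

/-- Theorem 1 of the paper.  Let `h_l(x) = ∑_{k ≥ l} b_k x^k` be a complex
power series with radius of convergence `R`, and `h̃_l(x) = ∑_{k ≥ l} ‖b_k‖ x^k`.  Let `A` be
an `n×n` complex matrix with spectral radius `ρ(A) < R`, and let `N` be a subordinate
(operator) matrix norm, i.e. the norm induced by a vector norm `ν` on `ℂⁿ`:
`N A = sup { ν (A x) : ν x = 1 }`.  Suppose `N (A^k) ≤ a k` for every `k ≥ 1`.  Let
`1 ≤ p ≤ l`, let `p₀` be the multiple of `p` with `l ≤ p₀ ≤ l + p - 1`, and set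
`α_p = max { (a k)^{1/k} : k = p, l, l+1, …, p₀-1, p₀+1, …, l+p-1 }`.
If `α_p < R` then `N (h_l(A)) ≤ h̃_l(α_p)`, i.e.
`N (∑_{k ≥ l} b_k A^k) ≤ ∑_{k ≥ l} ‖b_k‖ α_p^k`. -/
theorem subordinate_norm_power_series_le {n : ℕ}
    (ν : (Fin n → ℂ) → ℝ)
    (hν_add : ∀ x y, ν (x + y) ≤ ν x + ν y)
    (hν_smul : ∀ (c : ℂ) (x), ν (c • x) = ‖c‖ * ν x)
    (hν_eq_zero : ∀ x, ν x = 0 ↔ x = 0)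
    (N : Matrix (Fin n) (Fin n) ℂ → ℝ)
    (hN : ∀ A : Matrix (Fin n) (Fin n) ℂ,
      N A = sSup ((fun x => ν (A.mulVec x)) '' {x | ν x = 1}))
    (b : ℕ → ℂ) (l : ℕ) (R : ℝ≥0∞)
    (hR : (FormalMultilinearSeries.ofScalars ℂ
        (fun k => if k < l then 0 else b k)).radius = R)
    (A : Matrix (Fin n) (Fin n) ℂ)
    (hρ : spectralRadius ℂ A < R)
    (a : ℕ → ℝ) (ha : ∀ k : ℕ, 0 < k → N (A ^ k) ≤ a k)
    (p : ℕ) (hp1 : 1 ≤ p) (hpl : p ≤ l)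
    (p₀ : ℕ) (hp₀mul : p ∣ p₀) (hp₀l : l ≤ p₀) (hp₀u : p₀ ≤ l + p - 1)
    (α : ℝ)
    (hα : α = (insert p ((Finset.Icc l (l + p - 1)).erase p₀)).sup'
        ⟨p, Finset.mem_insert_self p _⟩ (fun k => a k ^ ((k : ℝ)⁻¹)))
    (hαR : ENNReal.ofReal α < R) :
    N (∑' k : {k : ℕ // l ≤ k}, b (k : ℕ) • A ^ (k : ℕ)) ≤
      ∑' k : {k : ℕ // l ≤ k}, ‖b (k : ℕ)‖ * α ^ (k : ℕ) := by
  classical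
  -- basic facts about ν
  have hν0 : ν 0 = 0 := (hν_eq_zero 0).mpr rfl
  have hνneg : ∀ x, ν (-x) = ν x := by
    intro x
    have h := hν_smul (-1) x
    simpa using h
  have hνnonneg : ∀ x, 0 ≤ ν x := by
    intro x
    have h := hν_add x (-x)
    rw [add_neg_cancel, hν0, hνneg] at h
    linarith
  -- N is nonnegative
  have hNnonneg : ∀ M, 0 ≤ N M := by
    intro M
    rw [hN]
    apply Real.sSup_nonneg
    rintro y ⟨x, hx, rfl⟩
    exact hνnonneg _
  -- α is nonnegative
  have hap0 : 0 ≤ a p := le_trans (hNnonneg _) (ha p hp1)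
  have hα0 : 0 ≤ α := by
    rw [hα]
    exact le_trans (Real.rpow_nonneg hap0 _)
      (Finset.le_sup' (fun k => a k ^ ((k : ℝ)⁻¹)) (Finset.mem_insert_self p _))
  -- summability of the scalar majorant series
  have hsum1 : Summable (fun k : ℕ => ‖(fun k => if k < l then 0 else b k) k‖ * α ^ k) := by
    have h0 := (FormalMultilinearSeries.ofScalars ℂ
        (fun k => if k < l then 0 else b k)).summable_norm_mul_pow
        (r := α.toNNReal) (by
          rw [hR]
          have : ((α.toNNReal : ℝ≥0∞)) = ENNReal.ofReal α := rfl
          rw [this]; exact hαR)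
    exact h0.congr fun k => by
      rw [FormalMultilinearSeries.ofScalars_norm, Real.coe_toNNReal α hα0]
  have hb' : Summable (fun k : {k : ℕ // l ≤ k} => ‖b (k : ℕ)‖ * α ^ (k : ℕ)) := by
    have h := hsum1.subtype {k : ℕ | l ≤ k}
    refine (Summable.congr h ?_)
    rintro ⟨k, hk⟩
    simp [Nat.not_lt.mpr hk]
  -- trivial case: `n = 0`
  rcases Nat.eq_zero_or_pos n with hn | hn
  · subst hn
    have hset : {x : Fin 0 → ℂ | ν x = 1} = ∅ := by
      ext x
      simp only [Set.mem_setOf_eq, Set.mem_empty_iff_false, iff_false]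
      have hx : x = 0 := Subsingleton.elim _ _
      rw [hx, hν0]
      norm_num
    have hz : N (∑' k : {k : ℕ // l ≤ k}, b (k : ℕ) • A ^ (k : ℕ)) = 0 := by
      rw [hN, hset]
      simp [Real.sSup_empty]
    rw [hz]
    exact tsum_nonneg fun k => mul_nonneg (norm_nonneg _) (pow_nonneg hα0 _)
  -- main case `n ≥ 1`
  -- upper bound for ν in terms of the sup norm
  set C : ℝ := ∑ i, ν (fun j => if i = j then (1 : ℂ) else 0) with hC
  have hC0 : 0 ≤ C := Finset.sum_nonneg fun i _ => hνnonneg _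
  have hνle : ∀ x, ν x ≤ C * ‖x‖ := by
    intro x
    calc ν x = ν (∑ i, x i • fun j => if i = j then (1 : ℂ) else 0) := by
          rw [← pi_eq_sum_univ x]
    _ ≤ ∑ i, ν (x i • fun j => if i = j then (1 : ℂ) else 0) :=
          Finset.le_sum_of_subadditive ν hν0.le hν_add _ _
    _ ≤ ∑ i, ν (fun j => if i = j then (1 : ℂ) else 0) * ‖x‖ := by
          refine Finset.sum_le_sum fun i _ => ?_
          rw [hν_smul, mul_comm]
          exact mul_le_mul_of_nonneg_left (norm_le_pi_norm x i) (hνnonneg _)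
    _ = C * ‖x‖ := by rw [← Finset.sum_mul]
  have hνsub : ∀ x y, ν x - ν y ≤ ν (x - y) := by
    intro x y
    have h := hν_add y (x - y)
    rw [add_sub_cancel] at h
    linarith
  have hνcont : Continuous ν := by
    refine (LipschitzWith.of_dist_le_mul (K := C.toNNReal) ?_).continuous
    intro x y
    rw [Real.dist_eq, dist_eq_norm, Real.coe_toNNReal _ hC0]
    have h1 := hνsub x y
    have h2 := hνsub y x
    rw [show y - x = -(x - y) by ring, hνneg] at h2
    have h3 := hνle (x - y)
    rw [abs_le]
    constructor <;> linarith
  -- minimum of ν on the unit sphere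
  have hcomp : IsCompact (Metric.sphere (0 : Fin n → ℂ) 1) := isCompact_sphere 0 1
  haveI : Nontrivial (Fin n → ℂ) := by
    refine ⟨⟨fun j => if (⟨0, hn⟩ : Fin n) = j then 1 else 0, 0, fun h => ?_⟩⟩
    have := congrFun h ⟨0, hn⟩
    simp at this
  have hne : (Metric.sphere (0 : Fin n → ℂ) 1).Nonempty :=
    NormedSpace.sphere_nonempty.mpr zero_le_one
  obtain ⟨x₀, hx₀mem, hx₀min⟩ := hcomp.exists_isMinOn hne hνcont.continuousOn
  set c : ℝ := ν x₀ with hcdef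
  have hx₀ne : x₀ ≠ 0 := by
    intro h
    rw [h] at hx₀mem
    simp at hx₀mem
  have hcne : c ≠ 0 := fun h => hx₀ne ((hν_eq_zero x₀).mp h)
  have hc0 : 0 < c := lt_of_le_of_ne (hνnonneg x₀) (Ne.symm hcne)
  -- lower bound for ν
  have hclow : ∀ x, c * ‖x‖ ≤ ν x := by
    intro x
    rcases eq_or_ne x 0 with rfl | hx
    · simp [hν0]
    · have hxn : 0 < ‖x‖ := norm_pos_iff.mpr hx
      have hu : ((‖x‖⁻¹ : ℝ) : ℂ) • x ∈ Metric.sphere (0 : Fin n → ℂ) 1 := by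
        rw [mem_sphere_zero_iff_norm, norm_smul, Complex.norm_real, Real.norm_eq_abs,
          abs_of_pos (inv_pos.mpr hxn), inv_mul_cancel₀ hxn.ne']
      have hmin := isMinOn_iff.mp hx₀min _ hu
      rw [hν_smul, Complex.norm_real, Real.norm_eq_abs, abs_of_pos (inv_pos.mpr hxn)] at hmin
      rw [← le_div_iff₀ hxn, div_eq_inv_mul]
      exact hmin
  -- bound for mulVec in sup norm
  have hmv : ∀ (M : Matrix (Fin n) (Fin n) ℂ) (x : Fin n → ℂ),
      ‖M.mulVec x‖ ≤ (∑ i, ∑ j, ‖M i j‖) * ‖x‖ := by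
    intro M x
    have hT0 : 0 ≤ ∑ i, ∑ j, ‖M i j‖ :=
      Finset.sum_nonneg fun i _ => Finset.sum_nonneg fun j _ => norm_nonneg _
    rw [pi_norm_le_iff_of_nonneg (mul_nonneg hT0 (norm_nonneg _))]
    intro i
    calc ‖M.mulVec x i‖ = ‖∑ j, M i j * x j‖ := by simp [Matrix.mulVec, dotProduct]
    _ ≤ ∑ j, ‖M i j * x j‖ := norm_sum_le _ _
    _ ≤ ∑ j, ‖M i j‖ * ‖x‖ := by
          refine Finset.sum_le_sum fun j _ => ?_
          rw [norm_mul]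
          exact mul_le_mul_of_nonneg_left (norm_le_pi_norm x j) (norm_nonneg _)
    _ = (∑ j, ‖M i j‖) * ‖x‖ := (Finset.sum_mul _ _ _).symm
    _ ≤ (∑ i, ∑ j, ‖M i j‖) * ‖x‖ := by
          refine mul_le_mul_of_nonneg_right ?_ (norm_nonneg _)
          exact Finset.single_le_sum
            (fun i _ => Finset.sum_nonneg fun j _ => norm_nonneg _) (Finset.mem_univ i)
  -- the image set is nonempty and bounded above
  have hx₀sph : ν (((c⁻¹ : ℝ) : ℂ) • x₀) = 1 := by
    rw [hν_smul, Complex.norm_real, Real.norm_eq_abs, abs_of_pos (inv_pos.mpr hc0), inv_mul_cancel₀ hcne]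
  have hSne : ∀ M : Matrix (Fin n) (Fin n) ℂ,
      ((fun x => ν (M.mulVec x)) '' {x | ν x = 1}).Nonempty :=
    fun M => ⟨_, ⟨_, hx₀sph, rfl⟩⟩
  have hxb : ∀ x : Fin n → ℂ, ν x = 1 → ‖x‖ ≤ 1 / c := by
    intro x hx
    rw [le_div_iff₀ hc0]
    have := hclow x
    rw [hx] at this
    linarith
  have hbdd : ∀ M : Matrix (Fin n) (Fin n) ℂ,
      BddAbove ((fun x => ν (M.mulVec x)) '' {x | ν x = 1}) := by
    intro M
    refine ⟨C * ((∑ i, ∑ j, ‖M i j‖) * (1 / c)), ?_⟩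
    rintro y ⟨x, hx, rfl⟩
    have hT0 : 0 ≤ ∑ i, ∑ j, ‖M i j‖ :=
      Finset.sum_nonneg fun i _ => Finset.sum_nonneg fun j _ => norm_nonneg _
    calc ν (M.mulVec x) ≤ C * ‖M.mulVec x‖ := hνle _
    _ ≤ C * ((∑ i, ∑ j, ‖M i j‖) * ‖x‖) := by
          refine mul_le_mul_of_nonneg_left ?_ hC0
          have := hmv M x
          linarith
    _ ≤ C * ((∑ i, ∑ j, ‖M i j‖) * (1 / c)) := by
          refine mul_le_mul_of_nonneg_left
            (mul_le_mul_of_nonneg_left (hxb x hx) hT0) hC0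
  -- membership bound: ν (M x) ≤ N M for ν x = 1
  have hmem : ∀ (M : Matrix (Fin n) (Fin n) ℂ) x, ν x = 1 → ν (M.mulVec x) ≤ N M := by
    intro M x hx
    rw [hN]
    exact le_csSup (hbdd M) ⟨x, hx, rfl⟩
  -- key homogeneous bound
  have hkey : ∀ (M : Matrix (Fin n) (Fin n) ℂ) x, ν (M.mulVec x) ≤ N M * ν x := by
    intro M x
    rcases eq_or_ne x 0 with rfl | hx
    · simp [Matrix.mulVec_zero, hν0]
    · have hνxne : ν x ≠ 0 := fun h => hx ((hν_eq_zero x).mp h)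
      have hνx : 0 < ν x := lt_of_le_of_ne (hνnonneg x) (Ne.symm hνxne)
      have hu : ν ((((ν x)⁻¹ : ℝ) : ℂ) • x) = 1 := by
        rw [hν_smul, Complex.norm_real, Real.norm_eq_abs, abs_of_pos (inv_pos.mpr hνx),
          inv_mul_cancel₀ hνxne]
      have h1 := hmem M _ hu
      rw [Matrix.mulVec_smul, hν_smul, Complex.norm_real, Real.norm_eq_abs,
        abs_of_pos (inv_pos.mpr hνx), inv_mul_le_iff₀ hνx] at h1
      calc ν (M.mulVec x) ≤ ν x * N M := h1
      _ = N M * ν x := mul_comm _ _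
  -- submultiplicativity
  have hsubmul : ∀ M₁ M₂ : Matrix (Fin n) (Fin n) ℂ, N (M₁ * M₂) ≤ N M₁ * N M₂ := by
    intro M₁ M₂
    rw [hN (M₁ * M₂)]
    refine csSup_le (hSne _) ?_
    rintro y ⟨x, hx, rfl⟩
    show ν ((M₁ * M₂).mulVec x) ≤ N M₁ * N M₂
    rw [← Matrix.mulVec_mulVec]
    calc ν (M₁.mulVec (M₂.mulVec x)) ≤ N M₁ * ν (M₂.mulVec x) := hkey _ _
    _ ≤ N M₁ * N M₂ := mul_le_mul_of_nonneg_left (hmem M₂ x hx) (hNnonneg M₁)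
  -- subadditivity and N 0 = 0
  have hN0 : N 0 = 0 := by
    rw [hN]
    refine le_antisymm (csSup_le (hSne _) ?_) (Real.sSup_nonneg ?_)
    · rintro y ⟨x, hx, rfl⟩
      simp [Matrix.zero_mulVec, hν0]
    · rintro y ⟨x, hx, rfl⟩
      exact hνnonneg _
  have hNadd : ∀ M₁ M₂ : Matrix (Fin n) (Fin n) ℂ, N (M₁ + M₂) ≤ N M₁ + N M₂ := by
    intro M₁ M₂
    rw [hN (M₁ + M₂)]
    refine csSup_le (hSne _) ?_
    rintro y ⟨x, hx, rfl⟩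
    show ν ((M₁ + M₂).mulVec x) ≤ N M₁ + N M₂
    rw [Matrix.add_mulVec]
    exact le_trans (hν_add _ _) (add_le_add (hmem M₁ x hx) (hmem M₂ x hx))
  have hNsmul : ∀ (z : ℂ) (M : Matrix (Fin n) (Fin n) ℂ), N (z • M) ≤ ‖z‖ * N M := by
    intro z M
    rw [hN (z • M)]
    refine csSup_le (hSne _) ?_
    rintro y ⟨x, hx, rfl⟩
    show ν ((z • M).mulVec x) ≤ ‖z‖ * N M
    rw [Matrix.smul_mulVec, hν_smul]
    exact mul_le_mul_of_nonneg_left (hmem M x hx) (norm_nonneg z)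
  -- entrywise bound in terms of N
  have hentry : ∀ (M : Matrix (Fin n) (Fin n) ℂ) (i j : Fin n),
      ‖M i j‖ ≤ (ν (Pi.single j 1) / c) * N M := by
    intro M i j
    have h1 : ‖M i j‖ ≤ ‖M.mulVec (Pi.single j 1)‖ := by
      have := norm_le_pi_norm (M.mulVec (Pi.single j 1)) i
      simpa using this
    have h2 : c * ‖M.mulVec (Pi.single j 1)‖ ≤ ν (M.mulVec (Pi.single j 1)) := hclow _
    have h3 : ν (M.mulVec (Pi.single j 1)) ≤ N M * ν (Pi.single j 1) := hkey _ _
    rw [div_mul_eq_mul_div, le_div_iff₀ hc0]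
    nlinarith [hc0, norm_nonneg (M.mulVec (Pi.single j 1))]
  -- derive a j ≤ α ^ j on the relevant index set
  set S := insert p ((Finset.Icc l (l + p - 1)).erase p₀) with hS
  have hjpos : ∀ j ∈ S, 0 < j := by
    intro j hj
    rcases Finset.mem_insert.mp hj with rfl | hj
    · exact hp1
    · have h1 := (Finset.mem_Icc.mp (Finset.mem_erase.mp hj).2).1
      omega
  have haj : ∀ j ∈ S, a j ≤ α ^ j := by
    intro j hj
    have hj0 := hjpos j hj
    have haj0 : 0 ≤ a j := le_trans (hNnonneg _) (ha j hj0)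
    have h1 : a j ^ ((j : ℝ)⁻¹) ≤ α := by
      rw [hα]
      exact Finset.le_sup' (fun k => a k ^ ((k : ℝ)⁻¹)) hj
    calc a j = (a j ^ ((j : ℝ)⁻¹)) ^ (j : ℕ) := by
          rw [← Real.rpow_natCast (a j ^ ((j : ℝ)⁻¹)) j, ← Real.rpow_mul haj0,
            inv_mul_cancel₀ (by exact_mod_cast hj0.ne'), Real.rpow_one]
    _ ≤ α ^ j := pow_le_pow_left₀ (Real.rpow_nonneg haj0 _) h1 j
  have hNAp : N (A ^ p) ≤ α ^ p :=
    le_trans (ha p hp1) (haj p (Finset.mem_insert_self _ _))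
  have hαp0 : (0 : ℝ) ≤ α ^ p := pow_nonneg hα0 p
  -- auxiliary: N ((A^p)^s * B) ≤ (α^p)^s * N B
  have hL : ∀ (s : ℕ) (B : Matrix (Fin n) (Fin n) ℂ),
      N ((A ^ p) ^ s * B) ≤ (α ^ p) ^ s * N B := by
    intro s
    induction s with
    | zero => intro B; simp
    | succ s ih =>
        intro B
        have heq : (A ^ p) ^ (s + 1) * B = (A ^ p) * ((A ^ p) ^ s * B) := by
          rw [pow_succ']
          rw [mul_assoc]
        rw [heq]
        calc N ((A ^ p) * ((A ^ p) ^ s * B)) ≤ N (A ^ p) * N ((A ^ p) ^ s * B) :=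
              hsubmul _ _
        _ ≤ (α ^ p) * ((α ^ p) ^ s * N B) :=
              mul_le_mul hNAp (ih B) (hNnonneg _) hαp0
        _ = (α ^ p) ^ (s + 1) * N B := by ring
  -- key power bound
  have hNpow : ∀ k, l ≤ k → N (A ^ k) ≤ α ^ k := by
    intro k hk
    by_cases hdvd : p ∣ k
    · obtain ⟨m, rfl⟩ := hdvd
      have hm : 1 ≤ m := by
        rcases Nat.eq_zero_or_pos m with rfl | h
        · simp at hk; omega
        · exact h
      have heq : A ^ (p * m) = (A ^ p) ^ (m - 1) * A ^ p := by
        rw [pow_mul, ← pow_succ, Nat.sub_add_cancel hm]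
      rw [heq]
      calc N ((A ^ p) ^ (m - 1) * A ^ p) ≤ (α ^ p) ^ (m - 1) * N (A ^ p) := hL _ _
      _ ≤ (α ^ p) ^ (m - 1) * α ^ p :=
            mul_le_mul_of_nonneg_left hNAp (pow_nonneg hαp0 _)
      _ = α ^ (p * m) := by rw [← pow_succ, Nat.sub_add_cancel hm, ← pow_mul]
    · have hdm := Nat.div_add_mod (k - l) p
      set r := (k - l) % p with hr
      set q := (k - l) / p with hq
      set t := l + r with ht
      have hrp : r < p := Nat.mod_lt _ hp1
      have hkeq : k = p * q + t := by omega
      have htmem : t ∈ S := by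
        refine Finset.mem_insert_of_mem (Finset.mem_erase.mpr ⟨?_,
          Finset.mem_Icc.mpr ⟨by omega, by omega⟩⟩)
        intro hteq
        exact hdvd (hkeq ▸ Nat.dvd_add (dvd_mul_right p q) (hteq ▸ hp₀mul))
      have htpos := hjpos t htmem
      have hNt : N (A ^ t) ≤ α ^ t := le_trans (ha t htpos) (haj t htmem)
      have heq : A ^ k = (A ^ p) ^ q * A ^ t := by
        rw [← pow_mul, ← pow_add, ← hkeq]
      rw [heq]
      calc N ((A ^ p) ^ q * A ^ t) ≤ (α ^ p) ^ q * N (A ^ t) := hL _ _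
      _ ≤ (α ^ p) ^ q * α ^ t :=
            mul_le_mul_of_nonneg_left hNt (pow_nonneg hαp0 _)
      _ = α ^ k := by rw [← pow_mul, ← pow_add, ← hkeq]
  -- the matrix series and its termwise N-bound
  set f : {k : ℕ // l ≤ k} → Matrix (Fin n) (Fin n) ℂ :=
    fun k => b (k : ℕ) • A ^ (k : ℕ) with hf
  have hNf : ∀ k : {k : ℕ // l ≤ k}, N (f k) ≤ ‖b (k : ℕ)‖ * α ^ (k : ℕ) := fun k =>
    le_trans (hNsmul _ _)
      (mul_le_mul_of_nonneg_left (hNpow _ k.2) (norm_nonneg _))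
  -- summability of the matrix series (entrywise)
  have hfsum : Summable f := by
    refine Pi.summable.mpr ?_
    intro i
    rw [Pi.summable]
    intro j
    set D : ℝ := ν (Pi.single j 1) / c with hD
    have hD0 : 0 ≤ D := div_nonneg (hνnonneg _) hc0.le
    refine Summable.of_norm_bounded (g := fun k => D * (‖b (k : ℕ)‖ * α ^ (k : ℕ)))
      (hb'.mul_left D) ?_
    intro k
    have h1 : ‖f k i j‖ = ‖b (k : ℕ)‖ * ‖(A ^ (k : ℕ)) i j‖ := by
      simp [hf, Matrix.smul_apply, norm_mul]
    have h2 : ‖(A ^ (k : ℕ)) i j‖ ≤ D * N (A ^ (k : ℕ)) := hentry _ i j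
    have h3 : N (A ^ (k : ℕ)) ≤ α ^ (k : ℕ) := hNpow _ k.2
    calc ‖f k i j‖ = ‖b (k : ℕ)‖ * ‖(A ^ (k : ℕ)) i j‖ := h1
    _ ≤ ‖b (k : ℕ)‖ * (D * α ^ (k : ℕ)) := by
          refine mul_le_mul_of_nonneg_left ?_ (norm_nonneg _)
          calc ‖(A ^ (k : ℕ)) i j‖ ≤ D * N (A ^ (k : ℕ)) := h2
          _ ≤ D * α ^ (k : ℕ) := mul_le_mul_of_nonneg_left h3 hD0
    _ = D * (‖b (k : ℕ)‖ * α ^ (k : ℕ)) := by ring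
  -- continuity of N
  have hNcont : Continuous N := by
    rw [continuous_iff_continuousAt]
    intro M₀
    have hU : Continuous fun M : Matrix (Fin n) (Fin n) ℂ =>
        ∑ i, ∑ j, ‖M i j - M₀ i j‖ := by fun_prop
    have hNleT : ∀ M : Matrix (Fin n) (Fin n) ℂ,
        N M ≤ (C / c) * ∑ i, ∑ j, ‖M i j‖ := by
      intro M
      rw [hN M]
      refine csSup_le (hSne _) ?_
      rintro y ⟨x, hx, rfl⟩
      have hT0 : 0 ≤ ∑ i, ∑ j, ‖M i j‖ :=
        Finset.sum_nonneg fun i _ => Finset.sum_nonneg fun j _ => norm_nonneg _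
      calc ν (M.mulVec x) ≤ C * ‖M.mulVec x‖ := hνle _
      _ ≤ C * ((∑ i, ∑ j, ‖M i j‖) * ‖x‖) :=
            mul_le_mul_of_nonneg_left (hmv M x) hC0
      _ ≤ C * ((∑ i, ∑ j, ‖M i j‖) * (1 / c)) :=
            mul_le_mul_of_nonneg_left
              (mul_le_mul_of_nonneg_left (hxb x hx) hT0) hC0
      _ = (C / c) * ∑ i, ∑ j, ‖M i j‖ := by ring
    have hNdiff : ∀ M : Matrix (Fin n) (Fin n) ℂ,
        |N M - N M₀| ≤ (C / c) * ∑ i, ∑ j, ‖M i j - M₀ i j‖ := by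
      intro M
      have hsub : ∀ M₁ M₂ : Matrix (Fin n) (Fin n) ℂ, N M₁ - N M₂ ≤ N (M₁ - M₂) := by
        intro M₁ M₂
        have := hNadd (M₁ - M₂) M₂
        rw [sub_add_cancel] at this
        linarith
      have hNneg : ∀ M' : Matrix (Fin n) (Fin n) ℂ, N (-M') = N M' := by
        intro M'
        rw [hN (-M'), hN M']
        have hfun : (fun x => ν ((-M').mulVec x)) = fun x => ν (M'.mulVec x) := by
          funext x
          rw [Matrix.neg_mulVec, hνneg]
        rw [hfun]
      have h1 := hsub M M₀
      have h2 := hsub M₀ M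
      rw [show M₀ - M = -(M - M₀) from (neg_sub _ _).symm, hNneg] at h2
      have h3 : N (M - M₀) ≤ (C / c) * ∑ i, ∑ j, ‖M i j - M₀ i j‖ := by
        have := hNleT (M - M₀)
        simpa [Matrix.sub_apply] using this
      rw [abs_le]
      constructor <;> linarith
    rw [ContinuousAt, tendsto_iff_dist_tendsto_zero]
    have hg : Filter.Tendsto
        (fun M : Matrix (Fin n) (Fin n) ℂ => (C / c) * ∑ i, ∑ j, ‖M i j - M₀ i j‖)
        (nhds M₀) (nhds 0) := by
      have := (hU.tendsto M₀).const_mul (C / c)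
      simpa using this
    refine squeeze_zero (fun M => dist_nonneg) (fun M => ?_) hg
    rw [Real.dist_eq]
    exact hNdiff M
  -- final limit argument
  have hhas : HasSum f (∑' k, f k) := hfsum.hasSum
  have htend : Filter.Tendsto (fun s : Finset {k : ℕ // l ≤ k} => N (∑ k ∈ s, f k))
      Filter.atTop (nhds (N (∑' k, f k))) :=
    (hNcont.tendsto _).comp hhas
  refine le_of_tendsto htend (Filter.Eventually.of_forall fun s => ?_)
  calc N (∑ k ∈ s, f k) ≤ ∑ k ∈ s, N (f k) :=
        Finset.le_sum_of_subadditive N hN0.le hNadd s f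
  _ ≤ ∑ k ∈ s, ‖b (k : ℕ)‖ * α ^ (k : ℕ) := Finset.sum_le_sum fun k _ => hNf k
  _ ≤ ∑' k : {k : ℕ // l ≤ k}, ‖b (k : ℕ)‖ * α ^ (k : ℕ) :=
        hb'.sum_le_tsum s (fun k _ => mul_nonneg (norm_nonneg _) (pow_nonneg hα0 _))
end

section
/- Let A be an n-by-n complex matrix and let m be a positive integer. Suppose that for each positive integer k there exists a real number a_k with \|A^k\|_1 \le a_k. Let p be a positive integer with 1 \le p \le m+1, let p_0 be a multiple of p satisfying m+1 \le p_0 \le m+1+p, and define \alpha_p = max{ a_k^{1/k} : k = p, m+1, m+2, \ldots, p_0 - 1, p_0 + 1, p_0 + 2, \ldots, m+1+p }. If 0 < \alpha_p < m+2, then the Taylor remainder R_m(A) = e^A - \sum_{k=0}^{m} A^k/k! = \sum_{k=m+1}^{\infty} A^k/k! satisfies the strict bound \|R_m(A)\|_1 < (\alpha_p^{m+1}/(m+1)!) \cdot 1/(1 - \alpha_p/(m+2)). -/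
/-- The matrix 1-norm of a complex square matrix: the operator norm induced by the vector
1-norm, i.e. the maximum absolute column sum `max_j ∑_i ‖A i j‖`. -/
noncomputable def matrixOneNorm {n : ℕ} (A : Matrix (Fin n) (Fin n) ℂ) : ℝ :=
  ⨆ j, ∑ i, ‖A i j‖

open Matrix NormedSpace Finset

attribute [local instance] Matrix.linftyOpNormedAddCommGroup Matrix.linftyOpNormedRing
  Matrix.linftyOpNormedAlgebra

lemma matrixOneNorm_eq_norm_transpose {n : ℕ} (M : Matrix (Fin n) (Fin n) ℂ) :
    matrixOneNorm M = ‖Mᵀ‖ := by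
  rcases Nat.eq_zero_or_pos n with rfl | h
  · rw [matrixOneNorm, Matrix.linfty_opNorm_def]
    simp
  · haveI : Nonempty (Fin n) := Fin.pos_iff_nonempty.mp h
    rw [matrixOneNorm, Matrix.linfty_opNorm_def, ← Finset.sup'_univ_eq_ciSup,
      ← Finset.sup'_eq_sup Finset.univ_nonempty,
      Finset.comp_sup'_eq_sup'_comp _ ((↑) : NNReal → ℝ) (fun x y => NNReal.coe_mono.map_sup x y)]
    congr 1
    ext j
    simp [Matrix.transpose_apply]

lemma fact_aux (m : ℕ) : ∀ i : ℕ, (m+1).factorial * (m+2)^i ≤ (m+1+i).factorial := by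
  intro i
  induction i with
  | zero => simp
  | succ i ih =>
    have h1 : (m+1+(i+1)).factorial = (m+1+i+1) * (m+1+i).factorial := Nat.factorial_succ _
    calc (m+1).factorial * (m+2)^(i+1) = (m+2) * ((m+1).factorial * (m+2)^i) := by ring
      _ ≤ (m+2) * (m+1+i).factorial := Nat.mul_le_mul_left _ ih
      _ ≤ (m+1+i+1) * (m+1+i).factorial :=
          Nat.mul_le_mul_right _ (by omega)
      _ = (m+1+(i+1)).factorial := h1.symm

lemma fact_aux_strict (m : ℕ) : (m+1).factorial * (m+2)^2 < (m+1+2).factorial := by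
  have h1 : (m+1+2).factorial = (m+1+2) * ((m+1+1) * (m+1).factorial) := by
    rw [Nat.factorial_succ, Nat.factorial_succ]
  have h2 : (m+2)^2 < (m+1+2)*(m+1+1) := by nlinarith
  calc (m+1).factorial * (m+2)^2 < (m+1).factorial * ((m+1+2)*(m+1+1)) :=
        (Nat.mul_lt_mul_left (Nat.factorial_pos _)).mpr h2
    _ = (m+1+2) * ((m+1+1) * (m+1).factorial) := by ring
    _ = (m+1+2).factorial := h1.symm

/-- Theorem 2 of the paper.  Let `A` be an `n×n` complex matrix and `m ≥ 1`.
Suppose `‖A^k‖₁ ≤ a k` for every `k ≥ 1`.  Let `1 ≤ p ≤ m+1`, let `p₀` be a multiple of `p`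
with `m+1 ≤ p₀ ≤ m+1+p`, and let
`α_p = max { (a k)^{1/k} : k = p, m+1, m+2, …, p₀-1, p₀+1, …, m+1+p }`.
If `0 < α_p < m+2`, then the Taylor remainder `R_m(A) = e^A - ∑_{k=0}^m A^k/k!` satisfies
`‖R_m(A)‖₁ < (α_p^{m+1}/(m+1)!) · 1/(1 - α_p/(m+2))`. -/
theorem matrix_exp_taylor_remainder_oneNorm_lt {n : ℕ} (A : Matrix (Fin n) (Fin n) ℂ)
    (m : ℕ) (hm : 0 < m) (a : ℕ → ℝ) (ha : ∀ k : ℕ, 0 < k → matrixOneNorm (A ^ k) ≤ a k)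
    (p : ℕ) (hp1 : 1 ≤ p) (hpm : p ≤ m + 1)
    (p₀ : ℕ) (hp₀mul : p ∣ p₀) (hp₀l : m + 1 ≤ p₀) (hp₀u : p₀ ≤ m + 1 + p)
    (α : ℝ)
    (hα : α = (insert p ((Finset.Icc (m + 1) (m + 1 + p)).erase p₀)).sup'
        ⟨p, Finset.mem_insert_self p _⟩ (fun k => a k ^ ((k : ℝ)⁻¹)))
    (hα0 : 0 < α) (hαlt : α < m + 2) :
    matrixOneNorm (NormedSpace.exp A -
        ∑ k ∈ Finset.range (m + 1), (Nat.factorial k : ℂ)⁻¹ • A ^ k) <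
      α ^ (m + 1) / (Nat.factorial (m + 1) : ℝ) * (1 / (1 - α / (m + 2))) := by
  classical
  set B := Aᵀ with hB
  have hnonneg : ∀ (M : Matrix (Fin n) (Fin n) ℂ), 0 ≤ matrixOneNorm M := fun M =>
    Real.iSup_nonneg fun j => Finset.sum_nonneg fun i _ => norm_nonneg _
  have hBk : ∀ k : ℕ, 0 < k → ‖B ^ k‖ ≤ a k := by
    intro k hk
    rw [hB, ← Matrix.transpose_pow, ← matrixOneNorm_eq_norm_transpose]
    exact ha k hk
  have haS : ∀ k ∈ (insert p ((Finset.Icc (m + 1) (m + 1 + p)).erase p₀)),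
      ‖B ^ k‖ ≤ α ^ k := by
    intro k hk
    have hk0 : 0 < k := by
      rcases Finset.mem_insert.mp hk with rfl | hk'
      · exact hp1
      · have := Finset.mem_Icc.mp (Finset.mem_of_mem_erase hk')
        omega
    have h1 : a k ^ ((k : ℝ)⁻¹) ≤ α := by
      rw [hα]; exact Finset.le_sup' (fun k => a k ^ ((k : ℝ)⁻¹)) hk
    have h2 : 0 ≤ a k := le_trans (hnonneg _) (ha k hk0)
    calc ‖B ^ k‖ ≤ a k := hBk k hk0
      _ = (a k ^ ((k : ℝ)⁻¹)) ^ k := (Real.rpow_inv_natCast_pow h2 hk0.ne').symm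
      _ ≤ α ^ k := pow_le_pow_left₀ (Real.rpow_nonneg h2 _) h1 k
  have hBp : ‖B ^ p‖ ≤ α ^ p := haS p (Finset.mem_insert_self _ _)
  have hp₀bound : ‖B ^ p₀‖ ≤ α ^ p₀ := by
    obtain ⟨c, rfl⟩ := hp₀mul
    have hc : 0 < c := by
      rcases Nat.eq_zero_or_pos c with rfl | h; · omega
      exact h
    calc ‖B ^ (p * c)‖ = ‖(B ^ p) ^ c‖ := by rw [pow_mul]
      _ ≤ ‖B ^ p‖ ^ c := norm_pow_le' _ hc
      _ ≤ (α ^ p) ^ c := pow_le_pow_left₀ (norm_nonneg _) hBp c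
      _ = α ^ (p * c) := (pow_mul α p c).symm
  have hαk : ∀ k, m + 1 ≤ k → ‖B ^ k‖ ≤ α ^ k := by
    intro k
    induction k using Nat.strong_induction_on with
    | _ k ih =>
      intro hk
      by_cases hle : k ≤ m + 1 + p
      · by_cases hkp : k = p₀
        · exact hkp ▸ hp₀bound
        · exact haS k (Finset.mem_insert_of_mem
            (Finset.mem_erase.mpr ⟨hkp, Finset.mem_Icc.mpr ⟨hk, hle⟩⟩))
      · have h1 : m + 1 ≤ k - p := by omega
        have h2 : k - p < k := by omega
        calc ‖B ^ k‖ = ‖B ^ (k - p) * B ^ p‖ := by rw [← pow_add]; congr 2; omega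
          _ ≤ ‖B ^ (k - p)‖ * ‖B ^ p‖ := norm_mul_le _ _
          _ ≤ α ^ (k - p) * α ^ p := mul_le_mul (ih _ h2 h1) hBp (norm_nonneg _)
              (pow_nonneg hα0.le _)
          _ = α ^ k := by rw [← pow_add]; congr 1; omega
  -- series setup
  set f : ℕ → Matrix (Fin n) (Fin n) ℂ := fun k => ((k.factorial : ℂ))⁻¹ • B ^ k with hf
  have hsumf : Summable f := NormedSpace.expSeries_summable' (𝕂 := ℂ) B
  have hrem : NormedSpace.exp B - ∑ k ∈ Finset.range (m + 1), f k = ∑' i, f (i + (m + 1)) := by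
    have h := Summable.sum_add_tsum_nat_add (f := f) (m + 1) hsumf
    rw [NormedSpace.exp_eq_tsum (𝕂 := ℂ)]
    show (∑' k : ℕ, ((k.factorial : ℂ))⁻¹ • B ^ k) - ∑ k ∈ Finset.range (m + 1), f k
        = ∑' i, f (i + (m + 1))
    rw [← h]
    abel
  -- bounds on terms
  set g : ℕ → ℝ := fun i => α ^ (i + (m + 1)) / ((i + (m + 1)).factorial : ℝ) with hg
  set c : ℝ := α ^ (m + 1) / ((m + 1).factorial : ℝ) with hc
  set r : ℝ := α / (m + 2) with hr
  have hr0 : 0 < r := by positivity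
  have hr1 : r < 1 := by
    rw [hr, div_lt_one (by positivity)]
    exact hαlt
  have hfg : ∀ i : ℕ, ‖f (i + (m + 1))‖ ≤ g i := by
    intro i
    rw [hf, hg]
    simp only []
    rw [norm_smul, norm_inv]
    have : ‖((i + (m + 1)).factorial : ℂ)‖ = ((i + (m + 1)).factorial : ℝ) := by
      simp
    rw [this, div_eq_inv_mul]
    exact mul_le_mul_of_nonneg_left (hαk _ (by omega)) (by positivity)
  have hgcr : ∀ i : ℕ, g i ≤ c * r ^ i := by
    intro i
    have hcr : c * r ^ i = α ^ (i + (m + 1)) / (((m + 1).factorial : ℝ) * ((m : ℝ) + 2) ^ i) := by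
      rw [hc, hr, div_pow, div_mul_div_comm, ← pow_add]
      ring_nf
    rw [hcr, hg]
    apply div_le_div_of_nonneg_left (by positivity) (by positivity)
    calc ((m + 1).factorial : ℝ) * ((m : ℝ) + 2) ^ i
        = (((m + 1).factorial * (m + 2) ^ i : ℕ) : ℝ) := by push_cast; ring
      _ ≤ (((m + 1 + i).factorial : ℕ) : ℝ) := by exact_mod_cast fact_aux m i
      _ = ((i + (m + 1)).factorial : ℝ) := by rw [Nat.add_comm (m+1) i]
  have hgcr2 : g 2 < c * r ^ 2 := by
    have hcr : c * r ^ 2 = α ^ (2 + (m + 1)) / (((m + 1).factorial : ℝ) * ((m : ℝ) + 2) ^ 2) := by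
      rw [hc, hr, div_pow, div_mul_div_comm, ← pow_add]
      ring_nf
    rw [hcr, hg]
    apply div_lt_div_of_pos_left (by positivity) (by positivity)
    calc ((m + 1).factorial : ℝ) * ((m : ℝ) + 2) ^ 2
        = (((m + 1).factorial * (m + 2) ^ 2 : ℕ) : ℝ) := by push_cast; ring
      _ < (((m + 1 + 2).factorial : ℕ) : ℝ) := by exact_mod_cast fact_aux_strict m
      _ = ((2 + (m + 1)).factorial : ℝ) := by rw [Nat.add_comm (m+1) 2]
  have hsumcr : Summable (fun i : ℕ => c * r ^ i) :=
    (summable_geometric_of_lt_one hr0.le hr1).mul_left c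
  have hg0 : ∀ i, 0 ≤ g i := fun i => by rw [hg]; positivity
  have hsumg : Summable g := Summable.of_nonneg_of_le hg0 hgcr hsumcr
  have hsumnf : Summable fun i => ‖f (i + (m + 1))‖ :=
    Summable.of_nonneg_of_le (fun i => norm_nonneg _) hfg hsumg
  -- final chain
  have key : matrixOneNorm (NormedSpace.exp A -
      ∑ k ∈ Finset.range (m + 1), (Nat.factorial k : ℂ)⁻¹ • A ^ k)
      = ‖NormedSpace.exp B - ∑ k ∈ Finset.range (m + 1), f k‖ := by
    rw [matrixOneNorm_eq_norm_transpose]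
    congr 1
    rw [Matrix.transpose_sub, ← Matrix.exp_transpose, Matrix.transpose_sum]
    refine congrArg₂ _ rfl (Finset.sum_congr rfl fun k _ => ?_)
    rw [Matrix.transpose_smul, Matrix.transpose_pow]
  rw [key, hrem]
  calc ‖∑' i, f (i + (m + 1))‖ ≤ ∑' i, ‖f (i + (m + 1))‖ := norm_tsum_le_tsum_norm hsumnf
    _ ≤ ∑' i, g i := Summable.tsum_le_tsum hfg hsumnf hsumg
    _ < ∑' i, c * r ^ i := Summable.tsum_lt_tsum_of_nonneg hg0 hgcr hgcr2 hsumcr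
    _ = c * (1 - r)⁻¹ := by rw [tsum_mul_left, tsum_geometric_of_lt_one hr0.le hr1]
    _ = α ^ (m + 1) / (Nat.factorial (m + 1) : ℝ) * (1 / (1 - α / (m + 2))) := by
        rw [hc, hr, one_div]
end

section
/- Let A_1 be an n-by-t real matrix and A_2 a t-by-n real matrix, and set W = A_1 A_2 (an n-by-n matrix) and V = A_2 A_1 (a t-by-t matrix). Then the matrix exponential of W satisfies the exact identity e^W = I_n + A_1 \left( \sum_{i=0}^{\infty} V^i/(i+1)! \right) A_2, where I_n is the n-by-n identity matrix and the series \sum_{i=0}^{\infty} V^i/(i+1)! converges absolutely. -/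
attribute [local instance] Matrix.normedAddCommGroup
attribute [local instance] Matrix.normedSpace

open NormedSpace in
private lemma mat_norm_mul_le {m : ℕ} (A B : Matrix (Fin m) (Fin m) ℝ) :
    ‖A * B‖ ≤ m * ‖A‖ * ‖B‖ := by
  have hnn : (0:ℝ) ≤ m * ‖A‖ * ‖B‖ := by positivity
  rw [Matrix.norm_le_iff hnn]
  intro i j
  rw [Matrix.mul_apply]
  calc ‖∑ k, A i k * B k j‖ ≤ ∑ k, ‖A i k * B k j‖ := norm_sum_le _ _
    _ ≤ ∑ _k : Fin m, ‖A‖ * ‖B‖ := by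
        refine Finset.sum_le_sum fun k _ => ?_
        rw [norm_mul]
        exact mul_le_mul (Matrix.norm_entry_le_entrywise_sup_norm A)
          (Matrix.norm_entry_le_entrywise_sup_norm B) (norm_nonneg _) (norm_nonneg _)
    _ = m * ‖A‖ * ‖B‖ := by simp [mul_assoc]

private lemma mat_norm_pow_le {m : ℕ} (M : Matrix (Fin m) (Fin m) ℝ) (i : ℕ) :
    ‖M ^ i‖ ≤ ‖(1 : Matrix (Fin m) (Fin m) ℝ)‖ * ((m : ℝ) * ‖M‖) ^ i := by
  induction i with
  | zero => simp
  | succ i ih =>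
    rw [pow_succ]
    calc ‖M ^ i * M‖ ≤ m * ‖M ^ i‖ * ‖M‖ := mat_norm_mul_le _ _
      _ ≤ m * (‖(1 : Matrix (Fin m) (Fin m) ℝ)‖ * ((m : ℝ) * ‖M‖) ^ i) * ‖M‖ := by
          have : (0:ℝ) ≤ m := by positivity
          gcongr
      _ = ‖(1 : Matrix (Fin m) (Fin m) ℝ)‖ * ((m : ℝ) * ‖M‖) ^ (i + 1) := by ring

private lemma mat_summable_norm {m : ℕ} (M : Matrix (Fin m) (Fin m) ℝ) (c : ℕ → ℝ)
    (hc : ∀ i, |c i| ≤ ((Nat.factorial i : ℝ))⁻¹) :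
    Summable fun i : ℕ => ‖c i • M ^ i‖ := by
  refine Summable.of_nonneg_of_le (fun i => norm_nonneg _) (fun i => ?_)
    (((Real.summable_pow_div_factorial ((m : ℝ) * ‖M‖)).mul_left
      ‖(1 : Matrix (Fin m) (Fin m) ℝ)‖))
  rw [norm_smul, Real.norm_eq_abs]
  calc |c i| * ‖M ^ i‖ ≤ ((Nat.factorial i : ℝ))⁻¹ * (‖(1 : Matrix (Fin m) (Fin m) ℝ)‖ * ((m : ℝ) * ‖M‖) ^ i) := by
        exact mul_le_mul (hc i) (mat_norm_pow_le M i) (norm_nonneg _) (by positivity)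
    _ = ‖(1 : Matrix (Fin m) (Fin m) ℝ)‖ * (((m : ℝ) * ‖M‖) ^ i / (Nat.factorial i)) := by
        rw [div_eq_mul_inv]; ring

private lemma hc1 (i : ℕ) : |((Nat.factorial i : ℝ))⁻¹| ≤ ((Nat.factorial i : ℝ))⁻¹ := le_of_eq (abs_of_nonneg (by positivity))

private lemma hc2 (i : ℕ) : |((Nat.factorial (i+1) : ℝ))⁻¹| ≤ ((Nat.factorial i : ℝ))⁻¹ := by
  rw [abs_of_nonneg (by positivity)]
  apply inv_anti₀ (by positivity)
  exact_mod_cast Nat.factorial_le (Nat.le_succ i)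

/-- For an `n×t` real matrix `A₁` and a `t×n` real matrix `A₂`, setting
`W = A₁A₂` and `V = A₂A₁`, the matrix exponential satisfies the exact identity
`e^W = Iₙ + A₁ (∑_{i=0}^∞ V^i/(i+1)!) A₂`, and the series `∑_{i=0}^∞ V^i/(i+1)!`
converges absolutely. -/
theorem exp_lowRank_factorization {n t : ℕ}
    (A₁ : Matrix (Fin n) (Fin t) ℝ) (A₂ : Matrix (Fin t) (Fin n) ℝ) :
    NormedSpace.exp (A₁ * A₂) =
        1 + A₁ * (∑' i : ℕ, (Nat.factorial (i + 1) : ℝ)⁻¹ • (A₂ * A₁) ^ i) * A₂ ∧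
      Summable fun i : ℕ => ‖(Nat.factorial (i + 1) : ℝ)⁻¹ • (A₂ * A₁) ^ i‖ := by
  set V := A₂ * A₁ with hV
  set W := A₁ * A₂ with hW
  have hsumV : Summable fun i : ℕ => ‖(Nat.factorial (i + 1) : ℝ)⁻¹ • V ^ i‖ :=
    mat_summable_norm V _ hc2
  refine ⟨?_, hsumV⟩
  have hsumV' : Summable fun i : ℕ => (Nat.factorial (i + 1) : ℝ)⁻¹ • V ^ i :=
    summable_norm_iff.mp hsumV
  have hsumW : Summable fun k : ℕ => (Nat.factorial k : ℝ)⁻¹ • W ^ k :=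
    summable_norm_iff.mp (mat_summable_norm W _ hc1)
  have hWpow : ∀ i : ℕ, W ^ (i + 1) = A₁ * V ^ i * A₂ := by
    intro i
    induction i with
    | zero => simp [hW]
    | succ i ih =>
      rw [pow_succ, ih, pow_succ, hW, hV]
      simp only [Matrix.mul_assoc]
  -- linear map M ↦ A₁ * M * A₂ is continuous
  let L : Matrix (Fin t) (Fin t) ℝ →ₗ[ℝ] Matrix (Fin n) (Fin n) ℝ :=
    { toFun := fun M => A₁ * M * A₂
      map_add' := fun x y => by simp only [Matrix.mul_add, Matrix.add_mul]
      map_smul' := fun c x => by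
        simp [Matrix.mul_smul, Matrix.smul_mul] }
  have hLcont : Continuous L := L.continuous_of_finiteDimensional
  have hmap : A₁ * (∑' i : ℕ, (Nat.factorial (i + 1) : ℝ)⁻¹ • V ^ i) * A₂ =
      ∑' i : ℕ, A₁ * ((Nat.factorial (i + 1) : ℝ)⁻¹ • V ^ i) * A₂ := by
    exact ContinuousLinearMap.map_tsum ⟨L, hLcont⟩ hsumV'
  rw [NormedSpace.exp_eq_tsum (𝕂 := ℝ)]
  dsimp only
  rw [Summable.tsum_eq_zero_add hsumW]
  congr 1
  · simp
  rw [hmap]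
  refine tsum_congr fun i => ?_
  rw [hWpow i]
  simp [Matrix.mul_smul, Matrix.smul_mul]
end

section
/- Let W be an n-by-n complex matrix and m a positive integer. Suppose that for each positive integer k there exists a real number a_k with \|W^k\|_1 \le a_k. Let p be a positive integer with 1 \le p \le m+1, let p_0 be a multiple of p with m+1 \le p_0 \le m+1+p, and define \alpha_p = max{ a_k^{1/k} : k = p, m+1, m+2, \ldots, p_0 - 1, p_0 + 1, p_0 + 2, \ldots, m+1+p }. Assume \alpha_p > 0. Let \varepsilon > 0 and let s be a nonnegative integer such that \alpha_p/2^s \le \varepsilon^{1/(m+1)} and \varepsilon^{1/(m+1)} < m+2. Then the Taylor remainder of the scaled matrix satisfies \|R_m(W/2^s)\|_1 \le \varepsilon \cdot 1/(1 - \varepsilon^{1/(m+1)}/(m+2)), where R_m(A) = e^A - \sum_{k=0}^{m} A^k/k!. -/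
section Aux

open NormedSpace Matrix

attribute [local instance] Matrix.linftyOpNormedAddCommGroup Matrix.linftyOpNormedRing
  Matrix.linftyOpNormedAlgebra Matrix.linftyOpNormedSpace

/-- The matrix one-norm is the `L∞` operator norm of the transpose. -/
lemma matrixOneNorm_eq {n : ℕ} (A : Matrix (Fin n) (Fin n) ℂ) : matrixOneNorm A = ‖Aᵀ‖ := by
  rw [matrixOneNorm, Matrix.linfty_opNorm_def]
  rcases Nat.eq_zero_or_pos n with h | h
  · subst h
    simp [Real.iSup_of_isEmpty]
  · haveI : Nonempty (Fin n) := Fin.pos_iff_nonempty.1 h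
    have hne : (Finset.univ : Finset (Fin n)).Nonempty := Finset.univ_nonempty
    apply le_antisymm
    · refine Real.iSup_le (fun j => ?_) (by positivity)
      have : (∑ i, ‖A i j‖₊ : NNReal) ≤ Finset.univ.sup fun i : Fin n => ∑ j, ‖Aᵀ i j‖₊ := by
        refine le_trans (le_of_eq ?_) (Finset.le_sup (Finset.mem_univ j))
        simp [Matrix.transpose_apply]
      calc ∑ i, ‖A i j‖ = ((∑ i, ‖A i j‖₊ : NNReal) : ℝ) := by push_cast; rfl
        _ ≤ _ := by exact_mod_cast this
    · obtain ⟨j, hj⟩ := Finset.exists_mem_eq_sup Finset.univ hne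
        fun i : Fin n => ∑ j, ‖Aᵀ i j‖₊
      rw [hj.2]
      have : ((∑ k, ‖Aᵀ j k‖₊ : NNReal) : ℝ) = ∑ i, ‖A i j‖ := by
        push_cast; simp [Matrix.transpose_apply]
      rw [this]
      exact le_ciSup (f := fun j : Fin n => ∑ i, ‖A i j‖)
        (Set.Finite.bddAbove (Set.finite_range _)) j

lemma fact_ge_pow (m i : ℕ) : (m + 2) ^ i ≤ (m + 1 + i).factorial := by
  induction i with
  | zero => simpa using Nat.one_le_iff_ne_zero.mpr (Nat.factorial_ne_zero _)
  | succ i ih =>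
      calc (m + 2) ^ (i + 1) = (m + 2) ^ i * (m + 2) := pow_succ _ _
        _ ≤ (m + 1 + i).factorial * (m + 1 + i + 1) := Nat.mul_le_mul ih (by omega)
        _ = (m + 1 + (i + 1)).factorial := by
            rw [mul_comm, ← Nat.factorial_succ]
            rfl

set_option maxHeartbeats 2000000 in
/-- Abstract remainder bound in the `L∞` operator norm. -/
lemma remainder_bound {n : ℕ} (x : Matrix (Fin n) (Fin n) ℂ) (m : ℕ) (b : ℝ) (hb0 : 0 ≤ b)
    (hblt : b < m + 2) (hx : ∀ k, m + 1 ≤ k → ‖x ^ k‖ ≤ b ^ k) :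
    ‖exp x - ∑ k ∈ Finset.range (m + 1), (Nat.factorial k : ℂ)⁻¹ • x ^ k‖ ≤
      b ^ (m + 1) * (1 / (1 - b / (m + 2))) := by
  set f : ℕ → Matrix (Fin n) (Fin n) ℂ := fun k => (Nat.factorial k : ℂ)⁻¹ • x ^ k with hf
  have hsum : Summable f := expSeries_summable' (𝕂 := ℂ) x
  have hexp : exp x - ∑ k ∈ Finset.range (m + 1), f k = ∑' i, f (i + (m + 1)) := by
    have h := Summable.sum_add_tsum_nat_add (f := f) (m + 1) hsum
    have hex : exp x = ∑' i, f i := congrFun (exp_eq_tsum (𝕂 := ℂ)) x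
    rw [hex, ← h, add_sub_cancel_left]
  have hr0 : (0 : ℝ) ≤ b / (m + 2) := by positivity
  have hr1 : b / (m + 2) < 1 := (div_lt_one (by positivity)).2 hblt
  have hgs : Summable (fun i : ℕ => b ^ (m + 1) * (b / (m + 2)) ^ i) :=
    (summable_geometric_of_lt_one hr0 hr1).mul_left _
  have hterm : ∀ i : ℕ, ‖f (i + (m + 1))‖ ≤ b ^ (m + 1) * (b / (m + 2)) ^ i := by
    intro i
    have h1 : ‖f (i + (m + 1))‖ = ((i + (m + 1)).factorial : ℝ)⁻¹ * ‖x ^ (i + (m + 1))‖ := by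
      rw [hf, norm_smul]
      norm_num
    have h2 : ‖x ^ (i + (m + 1))‖ ≤ b ^ (i + (m + 1)) := hx _ (by omega)
    have hfacpos : (0 : ℝ) < ((i + (m + 1)).factorial : ℝ) := by
      exact_mod_cast (i + (m + 1)).factorial_pos
    calc ‖f (i + (m + 1))‖ ≤ ((i + (m + 1)).factorial : ℝ)⁻¹ * b ^ (i + (m + 1)) := by
          rw [h1]; gcongr
      _ = b ^ (m + 1) * (b ^ i / ((i + (m + 1)).factorial : ℝ)) := by
          rw [pow_add]; ring
      _ ≤ b ^ (m + 1) * (b ^ i / ((m + 2 : ℝ)) ^ i) := by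
          have hle : ((m + 2 : ℝ)) ^ i ≤ ((i + (m + 1)).factorial : ℝ) := by
            have := fact_ge_pow m i
            calc ((m + 2 : ℝ)) ^ i = (((m + 2) ^ i : ℕ) : ℝ) := by push_cast; ring
              _ ≤ (((m + 1 + i).factorial : ℕ) : ℝ) := by exact_mod_cast this
              _ = _ := by rw [show m + 1 + i = i + (m + 1) by omega]
          refine mul_le_mul_of_nonneg_left ?_ (pow_nonneg hb0 _)
          exact div_le_div_of_nonneg_left (pow_nonneg hb0 _) (by positivity) hle
      _ = b ^ (m + 1) * (b / (m + 2)) ^ i := by rw [div_pow]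
  have hnsum : Summable fun i : ℕ => ‖f (i + (m + 1))‖ :=
    (summable_nat_add_iff (m + 1)).2 (norm_expSeries_summable' (𝕂 := ℂ) x)
  calc ‖exp x - ∑ k ∈ Finset.range (m + 1), f k‖ = ‖∑' i, f (i + (m + 1))‖ := by rw [hexp]
    _ ≤ ∑' i, ‖f (i + (m + 1))‖ := norm_tsum_le_tsum_norm hnsum
    _ ≤ ∑' i : ℕ, b ^ (m + 1) * (b / (m + 2)) ^ i := Summable.tsum_le_tsum hterm hnsum hgs
    _ = b ^ (m + 1) * (1 - b / (m + 2))⁻¹ := by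
        rw [tsum_mul_left, tsum_geometric_of_lt_one hr0 hr1]
    _ = b ^ (m + 1) * (1 / (1 - b / (m + 2))) := by rw [one_div]

theorem aux_main {n : ℕ}
    (W : Matrix (Fin n) (Fin n) ℂ)
    (m : ℕ) (hm : 0 < m) (a : ℕ → ℝ) (ha : ∀ k : ℕ, 0 < k → matrixOneNorm (W ^ k) ≤ a k)
    (p : ℕ) (hp1 : 1 ≤ p) (hpm : p ≤ m + 1)
    (p₀ : ℕ) (hp₀mul : p ∣ p₀) (hp₀l : m + 1 ≤ p₀) (hp₀u : p₀ ≤ m + 1 + p)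
    (α : ℝ)
    (hα : α = (insert p ((Finset.Icc (m + 1) (m + 1 + p)).erase p₀)).sup'
        ⟨p, Finset.mem_insert_self p _⟩ (fun k => a k ^ ((k : ℝ)⁻¹)))
    (hα0 : 0 < α)
    (ε : ℝ) (hε : 0 < ε) (s : ℕ)
    (hs : α / 2 ^ s ≤ ε ^ ((m + 1 : ℝ)⁻¹))
    (hεlt : ε ^ ((m + 1 : ℝ)⁻¹) < m + 2) :
    matrixOneNorm (NormedSpace.exp ((2 ^ s : ℂ)⁻¹ • W) -
        ∑ k ∈ Finset.range (m + 1), (Nat.factorial k : ℂ)⁻¹ • ((2 ^ s : ℂ)⁻¹ • W) ^ k) ≤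
      ε * (1 / (1 - ε ^ ((m + 1 : ℝ)⁻¹) / (m + 2))) := by
  set t : ℝ := ε ^ ((m + 1 : ℝ)⁻¹) with ht
  set b : ℝ := α / 2 ^ s with hb
  set x : Matrix (Fin n) (Fin n) ℂ := (2 ^ s : ℂ)⁻¹ • Wᵀ with hx
  have hb0 : 0 ≤ b := by positivity
  have ht0 : 0 ≤ t := Real.rpow_nonneg hε.le _
  have hbt : b ≤ t := hs
  have hblt : b < m + 2 := lt_of_le_of_lt hbt hεlt
  -- the finset of exponents
  set S : Finset ℕ := insert p ((Finset.Icc (m + 1) (m + 1 + p)).erase p₀) with hS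
  -- bound for exponents in S
  have hSbound : ∀ j ∈ S, ‖x ^ j‖ ≤ b ^ j := by
    intro j hj
    have hj1 : 1 ≤ j := by
      rcases Finset.mem_insert.1 hj with h | h
      · omega
      · have := (Finset.mem_erase.1 h).2
        have := Finset.mem_Icc.1 (Finset.mem_erase.1 h).2
        omega
    have haj0 : 0 ≤ a j := le_trans (by rw [matrixOneNorm_eq]; exact norm_nonneg _) (ha j hj1)
    have hαj : a j ≤ α ^ j := by
      have hle : a j ^ ((j : ℝ)⁻¹) ≤ α := by
        rw [hα]; exact Finset.le_sup' (fun k => a k ^ ((k : ℝ)⁻¹)) hj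
      calc a j = (a j ^ ((j : ℝ)⁻¹)) ^ j := (Real.rpow_inv_natCast_pow haj0 (by omega)).symm
        _ ≤ α ^ j := pow_le_pow_left₀ (Real.rpow_nonneg haj0 _) hle j
    have hxj : ‖x ^ j‖ = ((2 : ℝ) ^ s)⁻¹ ^ j * matrixOneNorm (W ^ j) := by
      rw [matrixOneNorm_eq, hx, smul_pow, norm_smul, ← Matrix.transpose_pow]
      congr 1
      simp [norm_pow]
    calc ‖x ^ j‖ = ((2 : ℝ) ^ s)⁻¹ ^ j * matrixOneNorm (W ^ j) := hxj
      _ ≤ ((2 : ℝ) ^ s)⁻¹ ^ j * α ^ j :=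
          mul_le_mul_of_nonneg_left (le_trans (ha j hj1) hαj) (by positivity)
      _ = b ^ j := by rw [hb, div_pow, div_eq_mul_inv, mul_comm, inv_pow]
  have hpS : p ∈ S := Finset.mem_insert_self _ _
  -- bound for all exponents ≥ m+1
  have hxk : ∀ k, m + 1 ≤ k → ‖x ^ k‖ ≤ b ^ k := by
    intro k hk
    by_cases hpk : p ∣ k
    · obtain ⟨c, rfl⟩ := hpk
      have hc : 0 < c := by
        rcases Nat.eq_zero_or_pos c with rfl | h
        · omega
        · exact h
      calc ‖x ^ (p * c)‖ = ‖(x ^ p) ^ c‖ := by rw [pow_mul]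
        _ ≤ ‖x ^ p‖ ^ c := norm_pow_le' _ hc
        _ ≤ (b ^ p) ^ c := pow_le_pow_left₀ (norm_nonneg _) (hSbound p hpS) c
        _ = b ^ (p * c) := (pow_mul _ _ _).symm
    · set r : ℕ := m + 1 + (k - (m + 1)) % p with hr
      obtain ⟨q, hkey⟩ : ∃ q, k - (m + 1) = p * q + (k - (m + 1)) % p :=
        ⟨(k - (m + 1)) / p, (Nat.div_add_mod _ _).symm⟩
      have hkrq : k = r + p * q := by omega
      have hrlt : (k - (m + 1)) % p < p := Nat.mod_lt _ (by omega)
      have hrS : r ∈ S := by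
        refine Finset.mem_insert_of_mem (Finset.mem_erase.2 ⟨?_, ?_⟩)
        · intro hrp
          apply hpk
          have hdr : p ∣ r := hrp ▸ hp₀mul
          have : p ∣ r + p * q := hdr.add (Dvd.intro q rfl)
          rwa [← hkrq] at this
        · exact Finset.mem_Icc.2 ⟨by omega, by omega⟩
      rcases Nat.eq_zero_or_pos q with hq0 | hq0
      · have hkr : k = r := by rw [hkrq, hq0]; ring
        rw [hkr]; exact hSbound r hrS
      · calc ‖x ^ k‖ = ‖x ^ r * (x ^ p) ^ q‖ := by rw [← pow_mul, ← pow_add, ← hkrq]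
          _ ≤ ‖x ^ r‖ * ‖(x ^ p) ^ q‖ := norm_mul_le _ _
          _ ≤ b ^ r * ‖x ^ p‖ ^ q :=
              mul_le_mul (hSbound r hrS) (norm_pow_le' _ hq0) (norm_nonneg _) (pow_nonneg hb0 _)
          _ ≤ b ^ r * (b ^ p) ^ q :=
              mul_le_mul_of_nonneg_left
                (pow_le_pow_left₀ (norm_nonneg _) (hSbound p hpS) q) (pow_nonneg hb0 _)
          _ = b ^ k := by rw [← pow_mul, ← pow_add, ← hkrq]
  -- transpose identity
  have hT : (NormedSpace.exp ((2 ^ s : ℂ)⁻¹ • W) -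
        ∑ k ∈ Finset.range (m + 1), (Nat.factorial k : ℂ)⁻¹ • ((2 ^ s : ℂ)⁻¹ • W) ^ k)ᵀ =
      NormedSpace.exp x - ∑ k ∈ Finset.range (m + 1), (Nat.factorial k : ℂ)⁻¹ • x ^ k := by
    rw [Matrix.transpose_sub, ← Matrix.exp_transpose, Matrix.transpose_smul]
    congr 1
    rw [Matrix.transpose_sum]
    refine Finset.sum_congr rfl fun k _ => ?_
    rw [Matrix.transpose_smul, Matrix.transpose_pow, Matrix.transpose_smul]
  have hεeq : t ^ (m + 1) = ε := by
    have : ((m + 1 : ℕ) : ℝ) = (m : ℝ) + 1 := by push_cast; ring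
    rw [ht, ← this, Real.rpow_inv_natCast_pow hε.le (by omega)]
  have htden : 0 < 1 - t / (m + 2) := by
    have : t / (m + 2) < 1 := (div_lt_one (by positivity)).2 hεlt
    linarith
  have hbden : 0 < 1 - b / (m + 2) := by
    have : b / (m + 2) < 1 := (div_lt_one (by positivity)).2 hblt
    linarith
  calc matrixOneNorm (NormedSpace.exp ((2 ^ s : ℂ)⁻¹ • W) -
        ∑ k ∈ Finset.range (m + 1), (Nat.factorial k : ℂ)⁻¹ • ((2 ^ s : ℂ)⁻¹ • W) ^ k)
      = ‖NormedSpace.exp x - ∑ k ∈ Finset.range (m + 1), (Nat.factorial k : ℂ)⁻¹ • x ^ k‖ := by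
        rw [matrixOneNorm_eq, hT]
    _ ≤ b ^ (m + 1) * (1 / (1 - b / (m + 2))) := remainder_bound x m b hb0 hblt hxk
    _ ≤ ε * (1 / (1 - t / (m + 2))) := by
        have h1 : b ^ (m + 1) ≤ ε := by
          rw [← hεeq]; exact pow_le_pow_left₀ hb0 hbt _
        have h2 : 1 / (1 - b / (m + 2)) ≤ 1 / (1 - t / (m + 2)) := by
          apply one_div_le_one_div_of_le htden
          have : b / (m + 2) ≤ t / (m + 2) := by gcongr
          linarith
        exact mul_le_mul h1 h2 (by positivity) hε.le

end Aux

/-- Let `W` be an `n×n` complex matrix and `m ≥ 1`.  Suppose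
`‖W^k‖₁ ≤ a k` for every `k ≥ 1`.  Let `1 ≤ p ≤ m+1`, let `p₀` be a multiple of `p` with
`m+1 ≤ p₀ ≤ m+1+p`, and let
`α_p = max { (a k)^{1/k} : k = p, m+1, m+2, …, p₀-1, p₀+1, …, m+1+p }`, with `α_p > 0`.
Let `ε > 0` and let `s` be a nonnegative integer such that `α_p/2^s ≤ ε^{1/(m+1)}` and
`ε^{1/(m+1)} < m+2`.  Then the Taylor remainder of the scaled matrix satisfies
`‖R_m(W/2^s)‖₁ ≤ ε · 1/(1 - ε^{1/(m+1)}/(m+2))`, where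
`R_m(A) = e^A - ∑_{k=0}^m A^k/k!`. -/
theorem matrix_exp_scaled_taylor_remainder_oneNorm_le {n : ℕ}
    (W : Matrix (Fin n) (Fin n) ℂ)
    (m : ℕ) (hm : 0 < m) (a : ℕ → ℝ) (ha : ∀ k : ℕ, 0 < k → matrixOneNorm (W ^ k) ≤ a k)
    (p : ℕ) (hp1 : 1 ≤ p) (hpm : p ≤ m + 1)
    (p₀ : ℕ) (hp₀mul : p ∣ p₀) (hp₀l : m + 1 ≤ p₀) (hp₀u : p₀ ≤ m + 1 + p)
    (α : ℝ)
    (hα : α = (insert p ((Finset.Icc (m + 1) (m + 1 + p)).erase p₀)).sup'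
        ⟨p, Finset.mem_insert_self p _⟩ (fun k => a k ^ ((k : ℝ)⁻¹)))
    (hα0 : 0 < α)
    (ε : ℝ) (hε : 0 < ε) (s : ℕ)
    (hs : α / 2 ^ s ≤ ε ^ ((m + 1 : ℝ)⁻¹))
    (hεlt : ε ^ ((m + 1 : ℝ)⁻¹) < m + 2) :
    matrixOneNorm (NormedSpace.exp ((2 ^ s : ℂ)⁻¹ • W) -
        ∑ k ∈ Finset.range (m + 1), (Nat.factorial k : ℂ)⁻¹ • ((2 ^ s : ℂ)⁻¹ • W) ^ k) ≤
      ε * (1 / (1 - ε ^ ((m + 1 : ℝ)⁻¹) / (m + 2))) :=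
  aux_main W m hm a ha p hp1 hpm p₀ hp₀mul hp₀l hp₀u α hα hα0 ε hε s hs hεlt
end
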